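/- For every integer k ≥ 1, the Pisot sequence E(4, 16k+5) satisfies the recurrence a(n) = (4k+2)·a(n-1) − (3k+1)·a(n-2) for all n ≥ 2. -/

import Mathlib

lemma floor_aux (p q r e : ℤ) (hp : 0 < p) (he : 0 < e) (h2e : 2*e < p)
    (hq : q^2 = p*r + e) : ⌊(q:ℚ)^2/(p:ℚ) + 1/2⌋ = r := by
  have hpQ : (0:ℚ) < (p:ℚ) := by exact_mod_cast hp
  have hq2 : (q:ℚ)^2/(p:ℚ) = (r:ℚ) + (e:ℚ)/(p:ℚ) := by
    field_simp
    push_cast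
    exact_mod_cast (by linarith : q^2 = p*r+e)
  rw [hq2]
  have h1 : (0:ℚ) < (e:ℚ)/(p:ℚ) := div_pos (by exact_mod_cast he) hpQ
  have h2 : (e:ℚ)/(p:ℚ) < 1/2 := by
    rw [div_lt_iff₀ hpQ]
    push_cast
    rw [show (1:ℚ)/2 * (p:ℚ) = (p:ℚ)/2 by ring]
    rw [lt_div_iff₀ (by norm_num : (0:ℚ) < 2)]
    exact_mod_cast by linarith
  rw [add_assoc, Int.floor_intCast_add]
  have : ⌊(e:ℚ)/(p:ℚ) + 1/2⌋ = 0 := by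
    apply Int.floor_eq_zero_iff.mpr
    constructor <;> simp <;> linarith
  omega

theorem stmt_11 (k : ℤ) (hk : 1 ≤ k) (a : ℕ → ℤ)
    (h0 : a 0 = 4) (h1 : a 1 = 16*k+5)
    (hrec : ∀ n, 2 ≤ n → a n = ⌊((a (n-1) : ℚ)^2 / (a (n-2) : ℚ)) + 1/2⌋) :
    ∀ n, 2 ≤ n → a n = (4*k+2) * a (n-1) - (3*k+1) * a (n-2) := by
  have key : ∀ m : ℕ, a (m+1) ≥ (3*k+2) * a m ∧ a m > 2*(3*k+1)^m ∧
      (a (m+1))^2 - (4*k+2)*(a (m+1))*(a m) + (3*k+1)*(a m)^2 = (3*k+1)^m ∧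
      a (m+2) = (4*k+2) * a (m+1) - (3*k+1) * a m := by
    intro m
    induction m with
    | zero =>
      refine ⟨by rw [h0, h1]; linarith, by rw [h0]; norm_num, by rw [h0, h1]; ring, ?_⟩
      have h := hrec 2 (by norm_num)
      simp only [show (2:ℕ)-1 = 1 from rfl, show (2:ℕ)-2 = 0 from rfl] at h
      rw [h0, h1] at h ⊢
      rw [h, floor_aux 4 (16*k+5) (64*k^2+40*k+6) 1 (by norm_num) (by norm_num)
        (by norm_num) (by ring)]
      ring
    | succ m ih =>
      obtain ⟨hge, hpos, hE, hr⟩ := ih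
      have hkpos : (0:ℤ) < 3*k+1 := by linarith
      have hepos : (0:ℤ) < (3*k+1)^m := pow_pos hkpos m
      have hp : 0 < a m := by linarith
      have hq : 0 < a (m+1) := by nlinarith
      have hqsq : (a (m+1))^2 = (a m) * ((4*k+2) * a (m+1) - (3*k+1) * a m) + (3*k+1)^m := by
        linarith [hE]
      have hge' : a (m+2) ≥ (3*k+2) * a (m+1) := by
        rw [hr]; nlinarith
      have hpos' : a (m+1) > 2*(3*k+1)^(m+1) := by
        rw [pow_succ]; nlinarith
      have hE' : (a (m+2))^2 - (4*k+2)*(a (m+2))*(a (m+1)) + (3*k+1)*(a (m+1))^2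
          = (3*k+1)^(m+1) := by
        rw [hr, pow_succ]; linear_combination (3*k+1)*hE
      refine ⟨hge', hpos', hE', ?_⟩
      have h := hrec (m+3) (by omega)
      simp only [show m+3-1 = m+2 from rfl, show m+3-2 = m+1 from rfl] at h
      have hp' : 0 < a (m+1) := hq
      have he' : (0:ℤ) < (3*k+1)^(m+1) := pow_pos hkpos (m+1)
      have hqsq' : (a (m+2))^2 = (a (m+1)) * ((4*k+2) * a (m+2) - (3*k+1) * a (m+1)) + (3*k+1)^(m+1) := by
        linarith [hE']
      have h2e' : 2*(3*k+1)^(m+1) < a (m+1) := hpos'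
      rw [show m+1+2 = m+3 from rfl, h,
        floor_aux (a (m+1)) (a (m+2)) ((4*k+2) * a (m+2) - (3*k+1) * a (m+1))
          ((3*k+1)^(m+1)) hp' he' h2e' hqsq']
  intro n hn
  obtain ⟨m, rfl⟩ : ∃ m, n = m + 2 := ⟨n - 2, by omega⟩
  have := (key m).2.2.2
  simpa using this
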